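/- Let T be a bounded linear operator on a complex Hilbert space H and N an algebra norm on B(H). Then dw_N(T) ≥ (1/2) sqrt( N(|T|² + |T*|²) + 2 N(|T|)⁴ + 2 |N(Re(T))² + N(|T|)⁴ − N(Im(T))²| ). -/

import Mathlib

open ContinuousLinearMap Complex

variable {H : Type*} [NormedAddCommGroup H] [InnerProductSpace ℂ H] [CompleteSpace H]

/-- Real part of an operator: `Re(A) = (A + A*)/2`. -/
noncomputable def reOp (A : H →L[ℂ] H) : H →L[ℂ] H := (2 : ℂ)⁻¹ • (A + adjoint A)

/-- Imaginary part of an operator: `Im(A) = (A - A*)/(2i)`. -/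
noncomputable def imOp (A : H →L[ℂ] H) : H →L[ℂ] H := (2 * I)⁻¹ • (A - adjoint A)

/-- Modulus of an operator: `|A| = (A* A)^{1/2}`. -/
noncomputable def absOp (A : H →L[ℂ] H) : H →L[ℂ] H := CFC.sqrt (adjoint A * A)

/-- Generalized numerical radius. -/
noncomputable def wN (N : (H →L[ℂ] H) → ℝ) (T : H →L[ℂ] H) : ℝ :=
  ⨆ θ : ℝ, N (reOp (Complex.exp (θ * I) • T))

/-- Generalized Davis–Wielandt radius. -/
noncomputable def dwN (N : (H →L[ℂ] H) → ℝ) (T : H →L[ℂ] H) : ℝ :=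
  ⨆ θ : ℝ, Real.sqrt ((N (reOp (Complex.exp (θ * I) • T))) ^ 2
    + (N (reOp (Complex.exp (θ * I) • absOp T))) ^ 4)

set_option synthInstance.maxHeartbeats 1000000

lemma absOp_sa (T : H →L[ℂ] H) : IsSelfAdjoint (absOp T) :=
  .of_nonneg (CFC.sqrt_nonneg (a := adjoint T * T))

lemma absOp_sq (T : H →L[ℂ] H) : absOp T ^ 2 = adjoint T * T := by
  refine CFC.sq_sqrt _ ?_
  rw [← star_eq_adjoint]; exact star_mul_self_nonneg T

lemma reOp_sq (T : H →L[ℂ] H) : reOp T ^ 2 = (4:ℂ)⁻¹ • ((T + adjoint T)^2) := by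
  rw [reOp, smul_pow]; norm_num

lemma imOp_sq (T : H →L[ℂ] H) : imOp T ^ 2 = -(4:ℂ)⁻¹ • ((T - adjoint T)^2) := by
  rw [imOp, smul_pow, inv_pow, mul_pow, Complex.I_sq]; norm_num

lemma key_id (T : H →L[ℂ] H) :
    absOp T ^ 2 + absOp (adjoint T) ^ 2 = (2:ℂ) • (reOp T ^ 2) + (2:ℂ) • (imOp T ^ 2) := by
  rw [absOp_sq, absOp_sq, adjoint_adjoint, reOp_sq, imOp_sq]
  simp only [pow_two, mul_add, add_mul, mul_sub, sub_mul, smul_add, smul_sub, smul_smul]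
  module

lemma reOp_of_sa {A : H →L[ℂ] H} (hA : IsSelfAdjoint A) : reOp A = A := by
  rw [reOp, ← star_eq_adjoint, hA.star_eq, ← two_smul ℂ, smul_smul]
  norm_num

lemma reOp_I_smul (A : H →L[ℂ] H) : reOp (I • A) = -imOp A := by
  have hI : ((2:ℂ) * I)⁻¹ = -(2:ℂ)⁻¹ * I := by
    rw [mul_inv, Complex.inv_I]; ring
  rw [reOp, imOp, hI, ← star_eq_adjoint, ← star_eq_adjoint, star_smul]
  simp only [RCLike.star_def, Complex.conj_I, smul_add, smul_sub, smul_smul, neg_smul]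
  module

lemma reOp_I_smul_sa {A : H →L[ℂ] H} (hA : IsSelfAdjoint A) : reOp (I • A) = 0 := by
  rw [reOp, ← star_eq_adjoint, star_smul, RCLike.star_def, Complex.conj_I, hA.star_eq]
  simp

lemma exp_pi_div_two_I : Complex.exp (((Real.pi/2:ℝ):ℂ) * I) = I := by
  rw [Complex.exp_mul_I]
  push_cast
  rw [Complex.cos_pi_div_two, Complex.sin_pi_div_two]
  ring

theorem stmt_5 (N : (H →L[ℂ] H) → ℝ) (T : H →L[ℂ] H)
    (hN0 : ∀ A : H →L[ℂ] H, 0 ≤ N A)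
    (hNeq : ∀ A : H →L[ℂ] H, N A = 0 → A = 0)
    (hNadd : ∀ A B : H →L[ℂ] H, N (A + B) ≤ N A + N B)
    (hNsmul : ∀ (c : ℂ) (A : H →L[ℂ] H), N (c • A) = ‖c‖ * N A)
    (hNmul : ∀ A B : H →L[ℂ] H, N (A * B) ≤ N A * N B) :
    dwN N T ≥ (1 / 2) * Real.sqrt (N (absOp T ^ 2 + absOp (adjoint T) ^ 2)
      + 2 * (N (absOp T)) ^ 4
      + 2 * |(N (reOp T)) ^ 2 + (N (absOp T)) ^ 4 - (N (imOp T)) ^ 2|) := by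
  have N0 : N 0 = 0 := by
    have := hNsmul 0 0
    simpa using this
  have Nneg : ∀ A : H →L[ℂ] H, N (-A) = N A := by
    intro A
    have := hNsmul (-1) A
    simpa using this
  set f : ℝ → ℝ := fun θ => Real.sqrt ((N (reOp (Complex.exp (θ * I) • T))) ^ 2
    + (N (reOp (Complex.exp (θ * I) • absOp T))) ^ 4) with hf
  have hdw : dwN N T = ⨆ θ : ℝ, f θ := rfl
  have hexp : ∀ θ : ℝ, ‖Complex.exp ((θ:ℂ) * I)‖ = 1 := by
    intro θ
    rw [Complex.norm_exp_ofReal_mul_I]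
  have hbound : ∀ (A : H →L[ℂ] H) (θ : ℝ),
      N (reOp (Complex.exp ((θ:ℂ) * I) • A)) ≤ 2⁻¹ * (N A + N (adjoint A)) := by
    intro A θ
    rw [reOp, hNsmul]
    have h1 : N (Complex.exp ((θ:ℂ) * I) • A + adjoint (Complex.exp ((θ:ℂ) * I) • A))
        ≤ N A + N (adjoint A) := by
      refine (hNadd _ _).trans ?_
      have e1 : N (Complex.exp ((θ:ℂ) * I) • A) = N A := by rw [hNsmul, hexp, one_mul]
      have e2 : N (adjoint (Complex.exp ((θ:ℂ) * I) • A)) = N (adjoint A) := by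
        rw [← star_eq_adjoint, star_smul, hNsmul, norm_star, hexp, one_mul, star_eq_adjoint]
      rw [e1, e2]
    have hn : ‖(2:ℂ)⁻¹‖ = (2:ℝ)⁻¹ := by norm_num
    rw [hn]
    exact mul_le_mul_of_nonneg_left h1 (by norm_num)
  have hbddf : BddAbove (Set.range f) := by
    refine ⟨Real.sqrt ((2⁻¹ * (N T + N (adjoint T))) ^ 2
      + (2⁻¹ * (N (absOp T) + N (adjoint (absOp T)))) ^ 4), ?_⟩
    rintro _ ⟨θ, rfl⟩
    apply Real.sqrt_le_sqrt
    exact add_le_add (pow_le_pow_left₀ (hN0 _) (hbound T θ) 2)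
      (pow_le_pow_left₀ (hN0 _) (hbound (absOp T) θ) 4)
  have h0 : f 0 ≤ dwN N T := hdw ▸ le_ciSup hbddf 0
  have h1 : f (Real.pi / 2) ≤ dwN N T := hdw ▸ le_ciSup hbddf (Real.pi / 2)
  have f0 : f 0 = Real.sqrt ((N (reOp T)) ^ 2 + (N (absOp T)) ^ 4) := by
    simp only [hf, Complex.ofReal_zero, zero_mul, Complex.exp_zero, one_smul,
      reOp_of_sa (absOp_sa T)]
  have f1 : f (Real.pi / 2) = N (imOp T) := by
    simp only [hf]
    rw [exp_pi_div_two_I, reOp_I_smul, reOp_I_smul_sa (absOp_sa T), Nneg, N0]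
    rw [show (0:ℝ) ^ 4 = 0 by norm_num, add_zero, Real.sqrt_sq (hN0 _)]
  have x_le : N (absOp T ^ 2 + absOp (adjoint T) ^ 2)
      ≤ 2 * (N (reOp T)) ^ 2 + 2 * (N (imOp T)) ^ 2 := by
    rw [key_id]
    refine (hNadd _ _).trans ?_
    rw [hNsmul, hNsmul, show ‖(2:ℂ)‖ = (2:ℝ) by norm_num]
    have hA : N (reOp T ^ 2) ≤ (N (reOp T)) ^ 2 := by
      rw [pow_two, pow_two]; exact hNmul _ _
    have hB : N (imOp T ^ 2) ≤ (N (imOp T)) ^ 2 := by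
      rw [pow_two, pow_two]; exact hNmul _ _
    nlinarith
  have hsqrt4 : ∀ y : ℝ, 0 ≤ y → Real.sqrt (4 * y) = 2 * Real.sqrt y := by
    intro y hy
    rw [show (4:ℝ) = 2 ^ 2 by norm_num, Real.sqrt_mul (by positivity), Real.sqrt_sq (by norm_num)]
  rw [ge_iff_le]
  rcases le_total ((N (imOp T)) ^ 2) ((N (reOp T)) ^ 2 + (N (absOp T)) ^ 4) with hc | hc
  · have habs : |(N (reOp T)) ^ 2 + (N (absOp T)) ^ 4 - (N (imOp T)) ^ 2|
        = (N (reOp T)) ^ 2 + (N (absOp T)) ^ 4 - (N (imOp T)) ^ 2 :=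
      abs_of_nonneg (by linarith)
    have hle : N (absOp T ^ 2 + absOp (adjoint T) ^ 2) + 2 * (N (absOp T)) ^ 4
        + 2 * |(N (reOp T)) ^ 2 + (N (absOp T)) ^ 4 - (N (imOp T)) ^ 2|
        ≤ 4 * ((N (reOp T)) ^ 2 + (N (absOp T)) ^ 4) := by
      rw [habs]; linarith
    calc (1/2) * Real.sqrt (N (absOp T ^ 2 + absOp (adjoint T) ^ 2) + 2 * (N (absOp T)) ^ 4
          + 2 * |(N (reOp T)) ^ 2 + (N (absOp T)) ^ 4 - (N (imOp T)) ^ 2|)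
        ≤ (1/2) * Real.sqrt (4 * ((N (reOp T)) ^ 2 + (N (absOp T)) ^ 4)) :=
          mul_le_mul_of_nonneg_left (Real.sqrt_le_sqrt hle) (by norm_num)
      _ = Real.sqrt ((N (reOp T)) ^ 2 + (N (absOp T)) ^ 4) := by
          rw [hsqrt4 _ (by positivity)]; ring
      _ = f 0 := f0.symm
      _ ≤ dwN N T := h0
  · have habs : |(N (reOp T)) ^ 2 + (N (absOp T)) ^ 4 - (N (imOp T)) ^ 2|
        = (N (imOp T)) ^ 2 - ((N (reOp T)) ^ 2 + (N (absOp T)) ^ 4) :=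
      abs_of_nonpos (by linarith) |>.trans (by ring)
    have hle : N (absOp T ^ 2 + absOp (adjoint T) ^ 2) + 2 * (N (absOp T)) ^ 4
        + 2 * |(N (reOp T)) ^ 2 + (N (absOp T)) ^ 4 - (N (imOp T)) ^ 2|
        ≤ 4 * (N (imOp T)) ^ 2 := by
      rw [habs]; linarith
    calc (1/2) * Real.sqrt (N (absOp T ^ 2 + absOp (adjoint T) ^ 2) + 2 * (N (absOp T)) ^ 4
          + 2 * |(N (reOp T)) ^ 2 + (N (absOp T)) ^ 4 - (N (imOp T)) ^ 2|)
        ≤ (1/2) * Real.sqrt (4 * (N (imOp T)) ^ 2) :=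
          mul_le_mul_of_nonneg_left (Real.sqrt_le_sqrt hle) (by norm_num)
      _ = Real.sqrt ((N (imOp T)) ^ 2) := by rw [hsqrt4 _ (by positivity)]; ring
      _ = N (imOp T) := Real.sqrt_sq (hN0 _)
      _ = f (Real.pi / 2) := f1.symm
      _ ≤ dwN N T := h1
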